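/- For all integers n ≥ k ≥ 1, u_r(n,k) = Σ_{l=k}^{n} (-1)^{n-l} · u_r(l-1,k-1) · Π_{i=l}^{n-1} (i²+r). -/
import Mathlib


/-- `centralu r n k` is the r-central factorial number with even indices of the first kind. -/
def centralu (r : ℕ) : ℕ → ℕ → ℤ
  | 0, 0 => 1
  | 0, _ + 1 => 0
  | n + 1, 0 => (-1) ^ (n + 1) * ∏ i ∈ Finset.range (n + 1), ((i : ℤ) ^ 2 + r)
  | n + 1, k + 1 => centralu r n k - ((n : ℤ) ^ 2 + r) * centralu r n (k + 1)

lemma centralu_eq_zero (r : ℕ) : ∀ n k, n < k → centralu r n k = 0 := by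
  intro n
  induction n with
  | zero =>
    intro k hk
    match k, hk with
    | m + 1, _ => simp [centralu]
  | succ n ih =>
    intro k hk
    match k, hk with
    | m + 1, hk =>
      have h1 : n < m := Nat.lt_of_succ_lt_succ hk
      simp [centralu, ih m h1, ih (m + 1) (Nat.lt_succ_of_lt h1)]

theorem centralu_recurrence_sum (r n k : ℕ) (hk : 1 ≤ k) (h : k ≤ n) :
    centralu r n k =
      ∑ l ∈ Finset.Icc k n,
        (-1) ^ (n - l) * centralu r (l - 1) (k - 1) *
          ∏ i ∈ Finset.Ico l n, ((i : ℤ) ^ 2 + r) := by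
  obtain ⟨j, rfl⟩ : ∃ j, k = j + 1 := ⟨k - 1, (Nat.succ_pred_eq_of_pos hk).symm⟩
  clear hk
  induction n, h using Nat.le_induction with
  | base =>
    simp [Finset.Icc_self, centralu, centralu_eq_zero r j (j + 1) (Nat.lt_succ_self j)]
  | succ n hn ih =>
    rw [Finset.sum_Icc_succ_top (by omega : j + 1 ≤ n + 1)]
    have hrest :
        ∑ l ∈ Finset.Icc (j + 1) n,
          (-1) ^ (n + 1 - l) * centralu r (l - 1) (j + 1 - 1) *
            ∏ i ∈ Finset.Ico l (n + 1), ((i : ℤ) ^ 2 + r)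
        = -((n : ℤ) ^ 2 + r) *
          ∑ l ∈ Finset.Icc (j + 1) n,
            (-1) ^ (n - l) * centralu r (l - 1) (j + 1 - 1) *
              ∏ i ∈ Finset.Ico l n, ((i : ℤ) ^ 2 + r) := by
      rw [Finset.mul_sum]
      refine Finset.sum_congr rfl ?_
      intro l hl
      obtain ⟨hl1, hl2⟩ := Finset.mem_Icc.mp hl
      rw [Finset.prod_Ico_succ_top hl2]
      have hpow : n + 1 - l = (n - l) + 1 := by omega
      rw [hpow, pow_succ]
      ring
    rw [hrest, ← ih]
    have hdef : centralu r (n + 1) (j + 1)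
        = centralu r n j - ((n : ℤ) ^ 2 + r) * centralu r n (j + 1) := rfl
    rw [hdef]
    simp
    ring
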